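/- arXiv:2108.13310 — 15 statements merged into one kernel-verified Lean document; each statement's English description precedes it below -/
import Mathlib

section
/- Let (X,κ) and (Y,λ) be digital images and let f : X → Y be a function. Then f is (κ,λ)-continuous if and only if the induced function f_* : 2^X → 2^Y defined by f_*(A) = f(A) is (κ',λ')-continuous, and this holds if and only if the induced function f_* : K(X,κ') → K(Y,λ') defined by f_*(A) = f(A) is (κ',λ')-continuous. -/
/-- `a` and `b` are adjacent or equal ("⟷≤") with respect to adjacency relation `α`. -/
def AdjEq {A : Type*} (α : A → A → Prop) (a b : A) : Prop := α a b ∨ a = b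

/-- `f : (X,κ) → (Y,lam)` is digitally continuous: adjacency is sent to
adjacency-or-equality. -/
def DigCont {X Y : Type*} (κ : X → X → Prop) (lam : Y → Y → Prop) (f : X → Y) : Prop :=
  ∀ x x', κ x x' → AdjEq lam (f x) (f x')

/-- Continuity of `f` relative to carrier sets: `f` maps `S` into `T` and sends
`α`-adjacent elements of `S` to `β`-adjacent-or-equal elements. -/
def ContOn {A B : Type*} (α : A → A → Prop) (β : B → B → Prop)
    (S : Set A) (T : Set B) (f : A → B) : Prop :=
  (∀ a ∈ S, f a ∈ T) ∧ ∀ a ∈ S, ∀ a' ∈ S, α a a' → AdjEq β (f a) (f a')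

/-- The hyperspace adjacency `κ'`: distinct `A, B` are adjacent iff every point of `A`
is adjacent-or-equal to some point of `B` and vice versa. -/
def HyperAdj {X : Type*} (κ : X → X → Prop) (A B : Finset X) : Prop :=
  A ≠ B ∧ (∀ a ∈ A, ∃ b ∈ B, AdjEq κ a b) ∧ ∀ b ∈ B, ∃ a ∈ A, AdjEq κ b a

/-- A subset `S` is connected w.r.t. adjacency `α`: any two of its points are joined by
a path (finite sequence of consecutively adjacent-or-equal points) lying in `S`. -/
def ConnIn {A : Type*} (α : A → A → Prop) (S : Set A) : Prop :=
  ∀ a ∈ S, ∀ b ∈ S, ∃ (n : ℕ) (p : ℕ → A), p 0 = a ∧ p n = b ∧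
    (∀ i ≤ n, p i ∈ S) ∧ ∀ i < n, AdjEq α (p i) (p (i + 1))

/-- `a` and `b` are joined by a path lying in `S` (i.e. they are in the same
connected component of the graph induced on `S`). -/
def Chain {A : Type*} (α : A → A → Prop) (S : Set A) (a b : A) : Prop :=
  ∃ (n : ℕ) (p : ℕ → A), p 0 = a ∧ p n = b ∧
    (∀ i ≤ n, p i ∈ S) ∧ ∀ i < n, AdjEq α (p i) (p (i + 1))

/-- The carrier of the hyperspace `2^X`: nonempty finite subsets of `X`. -/
def TwoX (X : Type*) : Set (Finset X) := {A | A.Nonempty}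

/-- The carrier of `K(X,κ')`: nonempty finite κ-connected subsets of `X`. -/
def KSet {X : Type*} (κ : X → X → Prop) : Set (Finset X) :=
  {A | A.Nonempty ∧ ConnIn κ (A : Set X)}

/-- A digital homotopy from `f` to `g`, relative to carriers `S`, `T`:
a function `F : S × [0,m] → T` with `F(·,0) = f`, `F(·,m) = g`, all tracks
`t ↦ F(a,t)` are paths, and all time slices `a ↦ F(a,t)` are continuous. -/
def HtpyOn {A B : Type*} (α : A → A → Prop) (β : B → B → Prop)
    (S : Set A) (T : Set B) (f g : A → B) : Prop :=
  ∃ (m : ℕ) (F : A → ℕ → B),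
    (∀ a ∈ S, ∀ t ≤ m, F a t ∈ T) ∧
    (∀ a ∈ S, F a 0 = f a) ∧ (∀ a ∈ S, F a m = g a) ∧
    (∀ a ∈ S, ∀ t < m, AdjEq β (F a t) (F a (t + 1))) ∧
    (∀ t ≤ m, ∀ a ∈ S, ∀ a' ∈ S, α a a' → AdjEq β (F a t) (F a' t))

/-- A digital homotopy from `f` to `g` in exactly `m` steps (on full types). -/
def HtpyN {X Y : Type*} (κ : X → X → Prop) (lam : Y → Y → Prop)
    (f g : X → Y) (m : ℕ) : Prop :=
  ∃ F : X → ℕ → Y,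
    (∀ x, F x 0 = f x) ∧ (∀ x, F x m = g x) ∧
    (∀ x, ∀ t < m, AdjEq lam (F x t) (F x (t + 1))) ∧
    (∀ t ≤ m, DigCont κ lam fun x => F x t)

/-- `f` and `g` are digitally homotopic. -/
def Htpy {X Y : Type*} (κ : X → X → Prop) (lam : Y → Y → Prop) (f g : X → Y) : Prop :=
  ∃ m, HtpyN κ lam f g m

/-- The graphs on carriers `S` and `T` have the same homotopy type. -/
def HtpyEquivOn {A B : Type*} (α : A → A → Prop) (β : B → B → Prop)
    (S : Set A) (T : Set B) : Prop :=
  ∃ (f : A → B) (g : B → A),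
    ContOn α β S T f ∧ ContOn β α T S g ∧
    HtpyOn α α S S (g ∘ f) id ∧ HtpyOn β β T T (f ∘ g) id

/-- The graph on carrier `S` is contractible: the identity is homotopic to a constant. -/
def ContractibleOn {A : Type*} (α : A → A → Prop) (S : Set A) : Prop :=
  ∃ c ∈ S, HtpyOn α α S S id fun _ => c

/-- `Φ`-adjacency of functions: `f ≠ g` and `f(x) ⟷≤ g(x)` for all `x`. -/
def PhiAdj {X Y : Type*} (lam : Y → Y → Prop) (f g : X → Y) : Prop :=
  f ≠ g ∧ ∀ x, AdjEq lam (f x) (g x)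

/-- `Ψ`-adjacency of functions: `f ≠ g` and `x₀ ⟷≤ x₁` implies `f(x₀) ⟷≤ g(x₁)`. -/
def PsiAdj {X Y : Type*} (κ : X → X → Prop) (lam : Y → Y → Prop) (f g : X → Y) : Prop :=
  f ≠ g ∧ ∀ x₀ x₁, AdjEq κ x₀ x₁ → AdjEq lam (f x₀) (g x₁)

/-- `C` is a connected component of the graph induced on the vertex set `V`:
a maximal connected subset of `V`. -/
def IsComponentIn {A : Type*} (α : A → A → Prop) (V C : Set A) : Prop :=
  C ⊆ V ∧ ConnIn α C ∧ ∀ C' : Set A, C' ⊆ V → ConnIn α C' → C ⊆ C' → C' = C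


/-- `f` is `(κ,lam)`-continuous iff the induced map `A ↦ f(A)` is
`(κ',lam')`-continuous as a map `2^X → 2^Y`, iff it is `(κ',lam')`-continuous as a map
`K(X,κ') → K(Y,lam')`. -/
theorem stmt0 {X Y : Type*} [DecidableEq Y]
    (κ : X → X → Prop) (lam : Y → Y → Prop)
    (hκsymm : ∀ x y, κ x y → κ y x) (hκirr : ∀ x, ¬ κ x x)
    (hlsymm : ∀ x y, lam x y → lam y x) (hlirr : ∀ y, ¬ lam y y)
    (f : X → Y) :
    (DigCont κ lam f ↔
      ContOn (HyperAdj κ) (HyperAdj lam) (TwoX X) (TwoX Y) fun A => A.image f) ∧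
    (DigCont κ lam f ↔
      ContOn (HyperAdj κ) (HyperAdj lam) (KSet κ) (KSet lam) fun A => A.image f) := by
  have adj_map : DigCont κ lam f → ∀ a b, AdjEq κ a b → AdjEq lam (f a) (f b) := by
    rintro hf a b (h | rfl)
    · exact hf a b h
    · exact Or.inr rfl
  have fwd : DigCont κ lam f → ∀ A A' : Finset X, HyperAdj κ A A' →
      AdjEq (HyperAdj lam) (A.image f) (A'.image f) := by
    rintro hf A A' ⟨hne, h1, h2⟩
    by_cases heq : A.image f = A'.image f
    · exact Or.inr heq
    · left
      refine ⟨heq, ?_, ?_⟩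
      · intro y hy
        obtain ⟨a, ha, rfl⟩ := Finset.mem_image.mp hy
        obtain ⟨b, hb, hab⟩ := h1 a ha
        exact ⟨f b, Finset.mem_image_of_mem f hb, adj_map hf a b hab⟩
      · intro y hy
        obtain ⟨b, hb, rfl⟩ := Finset.mem_image.mp hy
        obtain ⟨a, ha, hab⟩ := h2 b hb
        exact ⟨f a, Finset.mem_image_of_mem f ha, adj_map hf b a hab⟩
  have conn_img : DigCont κ lam f → ∀ A : Finset X, ConnIn κ (A : Set X) →
      ConnIn lam ((A.image f : Finset Y) : Set Y) := by
    intro hf A hA y hy y' hy'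
    rw [Finset.coe_image] at hy hy' ⊢
    obtain ⟨a, ha, rfl⟩ := hy
    obtain ⟨a', ha', rfl⟩ := hy'
    obtain ⟨n, p, hp0, hpn, hpmem, hpadj⟩ := hA a ha a' ha'
    refine ⟨n, fun i => f (p i), by simp [hp0], by simp [hpn], ?_, ?_⟩
    · intro i hi
      exact ⟨p i, hpmem i hi, rfl⟩
    · intro i hi
      exact adj_map hf _ _ (hpadj i hi)
  have sing_conn : ∀ x : X, ConnIn κ (({x} : Finset X) : Set X) := by
    intro x a ha b hb
    have ha' : a = x := by simpa using ha
    have hb' : b = x := by simpa using hb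
    refine ⟨0, fun _ => x, ha'.symm, hb'.symm, fun i _ => ?_,
      fun i hi => absurd hi (Nat.not_lt_zero i)⟩
    simp
  have sing_hyper : ∀ x x', κ x x' → HyperAdj κ ({x} : Finset X) {x'} := by
    intro x x' h
    refine ⟨?_, ?_, ?_⟩
    · intro hc
      have : x = x' := Finset.singleton_injective hc
      subst this; exact hκirr x h
    · intro a ha
      rw [Finset.mem_singleton] at ha; subst ha
      exact ⟨x', Finset.mem_singleton_self _, Or.inl h⟩
    · intro b hb
      rw [Finset.mem_singleton] at hb; subst hb
      exact ⟨x, Finset.mem_singleton_self _, Or.inl (hκsymm _ _ h)⟩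
  have bwd : (∀ x x', κ x x' →
      AdjEq (HyperAdj lam) (({x} : Finset X).image f) (({x'} : Finset X).image f)) →
      DigCont κ lam f := by
    intro h x x' hxx'
    have := h x x' hxx'
    rw [Finset.image_singleton, Finset.image_singleton] at this
    rcases this with ⟨_, h1, _⟩ | heq
    · obtain ⟨b, hb, hab⟩ := h1 (f x) (Finset.mem_singleton_self _)
      rw [Finset.mem_singleton] at hb
      subst hb; exact hab
    · exact Or.inr (Finset.singleton_injective heq)
  constructor
  · constructor
    · intro hf
      refine ⟨fun A hA => ?_, fun A _ A' _ h => fwd hf A A' h⟩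
      exact hA.image f
    · intro ⟨_, hcont⟩
      apply bwd
      intro x x' h
      exact hcont _ (Finset.singleton_nonempty x) _ (Finset.singleton_nonempty x')
        (sing_hyper x x' h)
  · constructor
    · intro hf
      refine ⟨fun A hA => ⟨hA.1.image f, conn_img hf A hA.2⟩,
        fun A _ A' _ h => fwd hf A A' h⟩
    · intro ⟨_, hcont⟩
      apply bwd
      intro x x' h
      exact hcont _ ⟨Finset.singleton_nonempty x, sing_conn x⟩
        _ ⟨Finset.singleton_nonempty x', sing_conn x'⟩ (sing_hyper x x' h)
end

section
/- Let (X,κ) be a digital image, let Y ⊂ X, and let r : X → Y be a κ-retraction (a κ-continuous map with r|_Y = id_Y). Then the induced maps r_* : 2^X → 2^Y and r_* : K(X,κ') → K(Y,κ'), defined by r_*(A) = r(A), are κ'-retractions. -/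
lemma adjEq_map {X : Type*} {κ : X → X → Prop} {r : X → X} (hrcont : DigCont κ κ r)
    {a b : X} (h : AdjEq κ a b) : AdjEq κ (r a) (r b) := by
  rcases h with h | rfl
  · exact hrcont a b h
  · exact Or.inr rfl

lemma hyperAdjEq_image {X : Type*} [DecidableEq X] {κ : X → X → Prop} {r : X → X}
    (hrcont : DigCont κ κ r) {A B : Finset X} (h : HyperAdj κ A B) :
    AdjEq (HyperAdj κ) (A.image r) (B.image r) := by
  by_cases heq : A.image r = B.image r
  · exact Or.inr heq
  · refine Or.inl ⟨heq, ?_, ?_⟩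
    · intro x hx
      obtain ⟨a, ha, rfl⟩ := Finset.mem_image.mp hx
      obtain ⟨b, hb, hab⟩ := h.2.1 a ha
      exact ⟨r b, Finset.mem_image_of_mem r hb, adjEq_map hrcont hab⟩
    · intro x hx
      obtain ⟨b, hb, rfl⟩ := Finset.mem_image.mp hx
      obtain ⟨a, ha, hab⟩ := h.2.2 b hb
      exact ⟨r a, Finset.mem_image_of_mem r ha, adjEq_map hrcont hab⟩

lemma image_fix {X : Type*} [DecidableEq X] {Y : Set X} {r : X → X}
    (hrfix : ∀ y ∈ Y, r y = y) {A : Finset X} (hA : (A : Set X) ⊆ Y) :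
    A.image r = A := by
  apply Finset.image_congr (g := id) ?_ |>.trans A.image_id
  intro a ha
  exact hrfix a (hA ha)

lemma connIn_image {X : Type*} [DecidableEq X] {κ : X → X → Prop} {r : X → X}
    (hrcont : DigCont κ κ r) {A : Finset X} (hA : ConnIn κ (A : Set X)) :
    ConnIn κ ((A.image r : Finset X) : Set X) := by
  intro x hx y hy
  obtain ⟨a, ha, rfl⟩ := Finset.mem_image.mp (Finset.mem_coe.mp hx)
  obtain ⟨b, hb, rfl⟩ := Finset.mem_image.mp (Finset.mem_coe.mp hy)
  obtain ⟨n, p, hp0, hpn, hpin, hpadj⟩ := hA a ha b hb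
  refine ⟨n, r ∘ p, by simp [hp0], by simp [hpn], ?_, ?_⟩
  · intro i hi
    exact Finset.mem_coe.mpr (Finset.mem_image_of_mem r (hpin i hi))
  · intro i hi
    exact adjEq_map hrcont (hpadj i hi)

/-- if `r : X → Y ⊆ X` is a `κ`-retraction, then the induced maps
`A ↦ r(A)` are `κ'`-retractions `2^X → 2^Y` and `K(X,κ') → K(Y,κ')`. -/
theorem stmt1 {X : Type*} [DecidableEq X]
    (κ : X → X → Prop)
    (hκsymm : ∀ x y, κ x y → κ y x) (hκirr : ∀ x, ¬ κ x x)
    (Y : Set X) (r : X → X)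
    (hrY : ∀ x, r x ∈ Y) (hrcont : DigCont κ κ r) (hrfix : ∀ y ∈ Y, r y = y) :
    (ContOn (HyperAdj κ) (HyperAdj κ) (TwoX X)
        {A | A ∈ TwoX X ∧ (A : Set X) ⊆ Y} (fun A => A.image r) ∧
      ∀ A ∈ TwoX X, (A : Set X) ⊆ Y → A.image r = A) ∧
    (ContOn (HyperAdj κ) (HyperAdj κ) (KSet κ)
        {A | A ∈ KSet κ ∧ (A : Set X) ⊆ Y} (fun A => A.image r) ∧
      ∀ A ∈ KSet κ, (A : Set X) ⊆ Y → A.image r = A) := by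
  refine ⟨⟨⟨?_, ?_⟩, ?_⟩, ⟨⟨?_, ?_⟩, ?_⟩⟩
  · intro A hA
    refine ⟨hA.image r, ?_⟩
    intro x hx
    obtain ⟨a, _, rfl⟩ := Finset.mem_image.mp (Finset.mem_coe.mp hx)
    exact hrY a
  · intro A _ B _ h
    exact hyperAdjEq_image hrcont h
  · intro A _ hAY
    exact image_fix hrfix hAY
  · intro A hA
    refine ⟨⟨hA.1.image r, connIn_image hrcont hA.2⟩, ?_⟩
    intro x hx
    obtain ⟨a, _, rfl⟩ := Finset.mem_image.mp (Finset.mem_coe.mp hx)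
    exact hrY a
  · intro A _ B _ h
    exact hyperAdjEq_image hrcont h
  · intro A _ hAY
    exact image_fix hrfix hAY
end

section
/- Let (X,κ) and (Y,λ) be digital images having the same homotopy type. Then (2^X,κ') and (2^Y,λ') have the same homotopy type, and K(X,κ') and K(Y,λ') have the same homotopy type. -/
section Aux

variable {X Y : Type*}

lemma adjEq_symm {α : X → X → Prop} (hs : ∀ x y, α x y → α y x)
    {a b : X} (h : AdjEq α a b) : AdjEq α b a := by
  rcases h with h | h
  · exact Or.inl (hs _ _ h)
  · exact Or.inr h.symm

lemma digCont_adjEq {κ : X → X → Prop} {lam : Y → Y → Prop}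
    {f : X → Y} (hf : DigCont κ lam f) {a b : X} (h : AdjEq κ a b) :
    AdjEq lam (f a) (f b) := by
  rcases h with h | h
  · exact hf _ _ h
  · exact Or.inr (congrArg f h)

lemma hyper_adjEq [DecidableEq Y] {lam : Y → Y → Prop}
    {u v : X → Y} {A B : Finset X}
    (hAB : ∀ a ∈ A, ∃ b ∈ B, AdjEq lam (u a) (v b))
    (hBA : ∀ b ∈ B, ∃ a ∈ A, AdjEq lam (v b) (u a)) :
    AdjEq (HyperAdj lam) (A.image u) (B.image v) := by
  by_cases he : A.image u = B.image v
  · exact Or.inr he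
  · refine Or.inl ⟨he, ?_, ?_⟩
    · intro y hy
      rcases Finset.mem_image.mp hy with ⟨a, ha, rfl⟩
      rcases hAB a ha with ⟨b, hb, hadj⟩
      exact ⟨v b, Finset.mem_image_of_mem v hb, hadj⟩
    · intro y hy
      rcases Finset.mem_image.mp hy with ⟨b, hb, rfl⟩
      rcases hBA b hb with ⟨a, ha, hadj⟩
      exact ⟨u a, Finset.mem_image_of_mem u ha, hadj⟩

lemma conn_image [DecidableEq Y] {κ : X → X → Prop} {lam : Y → Y → Prop} {f : X → Y}
    (hf : DigCont κ lam f) {A : Finset X} (hA : ConnIn κ (A : Set X)) :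
    ConnIn lam ((A.image f : Finset Y) : Set Y) := by
  intro b hb b' hb'
  rcases Finset.mem_image.mp (by exact_mod_cast hb) with ⟨a, ha, rfl⟩
  rcases Finset.mem_image.mp (by exact_mod_cast hb') with ⟨a', ha', rfl⟩
  rcases hA a (by exact_mod_cast ha) a' (by exact_mod_cast ha') with
    ⟨n, p, h0, hn, hmem, hadj⟩
  refine ⟨n, f ∘ p, by simp [h0], by simp [hn], ?_, fun i hi => digCont_adjEq hf (hadj i hi)⟩
  intro i hi
  exact_mod_cast Finset.mem_image_of_mem f (by exact_mod_cast hmem i hi)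

lemma lift_htpy [DecidableEq X] {κ : X → X → Prop}
    (hκsymm : ∀ x y, κ x y → κ y x)
    {S : Set (Finset X)}
    (hS : ∀ u : X → X, DigCont κ κ u → ∀ A ∈ S, A.image u ∈ S)
    {w : X → X} (H : HtpyOn κ κ Set.univ Set.univ w id) :
    HtpyOn (HyperAdj κ) (HyperAdj κ) S S (fun A => A.image w) id := by
  obtain ⟨m, F, _hmem, h0, hm, htrack, hslice⟩ := H
  refine ⟨m, fun A t => A.image (fun x => F x t), ?_, ?_, ?_, ?_, ?_⟩
  · intro A hA t ht
    exact hS _ (fun x x' hxx' => hslice t ht x trivial x' trivial hxx') A hA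
  · intro A _
    have : (fun x => F x 0) = w := funext fun x => h0 x trivial
    simp only [this]
  · intro A _
    have : (fun x => F x m) = id := funext fun x => hm x trivial
    simp only [this, Finset.image_id, id]
  · intro A _ t ht
    exact hyper_adjEq (fun a ha => ⟨a, ha, htrack a trivial t ht⟩)
      (fun a ha => ⟨a, ha, adjEq_symm hκsymm (htrack a trivial t ht)⟩)
  · intro t ht A _ A' _ hAA'
    have hc : DigCont κ κ (fun x => F x t) :=
      fun x x' hxx' => hslice t ht x trivial x' trivial hxx'
    refine hyper_adjEq ?_ ?_
    · intro a ha
      rcases hAA'.2.1 a ha with ⟨b, hb, hab⟩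
      exact ⟨b, hb, digCont_adjEq hc hab⟩
    · intro b hb
      rcases hAA'.2.2 b hb with ⟨a, ha, hba⟩
      exact ⟨a, ha, digCont_adjEq hc hba⟩

lemma lift_equiv [DecidableEq X] [DecidableEq Y] {κ : X → X → Prop} {lam : Y → Y → Prop}
    (hκsymm : ∀ x y, κ x y → κ y x) (hlsymm : ∀ x y, lam x y → lam y x)
    {S : Set (Finset X)} {T : Set (Finset Y)}
    (hS : ∀ u : X → X, DigCont κ κ u → ∀ A ∈ S, A.image u ∈ S)
    (hT : ∀ u : Y → Y, DigCont lam lam u → ∀ B ∈ T, B.image u ∈ T)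
    (hST : ∀ u : X → Y, DigCont κ lam u → ∀ A ∈ S, A.image u ∈ T)
    (hTS : ∀ u : Y → X, DigCont lam κ u → ∀ B ∈ T, B.image u ∈ S)
    (h : HtpyEquivOn κ lam (Set.univ : Set X) (Set.univ : Set Y)) :
    HtpyEquivOn (HyperAdj κ) (HyperAdj lam) S T := by
  obtain ⟨f, g, hf, hg, h1, h2⟩ := h
  have hfc : DigCont κ lam f := fun x x' hxx' => hf.2 x trivial x' trivial hxx'
  have hgc : DigCont lam κ g := fun y y' hyy' => hg.2 y trivial y' trivial hyy'
  refine ⟨fun A => A.image f, fun B => B.image g, ?_, ?_, ?_, ?_⟩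
  · refine ⟨hST f hfc, ?_⟩
    intro A _ A' _ hAA'
    refine hyper_adjEq ?_ ?_
    · intro a ha
      rcases hAA'.2.1 a ha with ⟨b, hb, hab⟩
      exact ⟨b, hb, digCont_adjEq hfc hab⟩
    · intro b hb
      rcases hAA'.2.2 b hb with ⟨a, ha, hba⟩
      exact ⟨a, ha, digCont_adjEq hfc hba⟩
  · refine ⟨hTS g hgc, ?_⟩
    intro A _ A' _ hAA'
    refine hyper_adjEq ?_ ?_
    · intro a ha
      rcases hAA'.2.1 a ha with ⟨b, hb, hab⟩
      exact ⟨b, hb, digCont_adjEq hgc hab⟩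
    · intro b hb
      rcases hAA'.2.2 b hb with ⟨a, ha, hba⟩
      exact ⟨a, ha, digCont_adjEq hgc hba⟩
  · have key := lift_htpy hκsymm hS (w := g ∘ f) h1
    have : ((fun B : Finset Y => B.image g) ∘ fun A : Finset X => A.image f)
        = fun A : Finset X => A.image (g ∘ f) := funext fun A => Finset.image_image
    rw [this]
    exact key
  · have key := lift_htpy hlsymm hT (w := f ∘ g) h2
    have : ((fun A : Finset X => A.image f) ∘ fun B : Finset Y => B.image g)
        = fun B : Finset Y => B.image (f ∘ g) := funext fun B => Finset.image_image
    rw [this]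
    exact key

end Aux

/-- if `(X,κ)` and `(Y,lam)` have the same homotopy type, then so do
`(2^X,κ')` and `(2^Y,lam')`, and so do `K(X,κ')` and `K(Y,lam')`. -/
theorem stmt3 {X Y : Type*} [DecidableEq X] [DecidableEq Y]
    (κ : X → X → Prop) (lam : Y → Y → Prop)
    (hκsymm : ∀ x y, κ x y → κ y x) (hκirr : ∀ x, ¬ κ x x)
    (hlsymm : ∀ x y, lam x y → lam y x) (hlirr : ∀ y, ¬ lam y y)
    (h : HtpyEquivOn κ lam (Set.univ : Set X) (Set.univ : Set Y)) :
    HtpyEquivOn (HyperAdj κ) (HyperAdj lam) (TwoX X) (TwoX Y) ∧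
    HtpyEquivOn (HyperAdj κ) (HyperAdj lam) (KSet κ) (KSet lam) := by
  constructor
  · exact lift_equiv hκsymm hlsymm
      (fun u _ A hA => hA.image u) (fun u _ B hB => hB.image u)
      (fun u _ A hA => hA.image u) (fun u _ B hB => hB.image u) h
  · exact lift_equiv hκsymm hlsymm
      (fun u hu A hA => ⟨hA.1.image u, conn_image hu hA.2⟩)
      (fun u hu B hB => ⟨hB.1.image u, conn_image hu hB.2⟩)
      (fun u hu A hA => ⟨hA.1.image u, conn_image hu hA.2⟩)
      (fun u hu B hB => ⟨hB.1.image u, conn_image hu hB.2⟩) h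
end

section
/- Let (X,κ) be a contractible digital image. Then (2^X,κ') is contractible, and K(X,κ') is contractible. -/
private lemma adjEqSymm {X : Type*} {κ : X → X → Prop} (hs : ∀ x y, κ x y → κ y x)
    {a b : X} (h : AdjEq κ a b) : AdjEq κ b a := by
  rcases h with h | rfl
  · exact Or.inl (hs _ _ h)
  · exact Or.inr rfl

private lemma imgAdj {X : Type*} [DecidableEq X] (κ : X → X → Prop) (A B : Finset X)
    (f g : X → X)
    (h1 : ∀ a ∈ A, ∃ b ∈ B, AdjEq κ (f a) (g b))
    (h2 : ∀ b ∈ B, ∃ a ∈ A, AdjEq κ (g b) (f a)) :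
    AdjEq (HyperAdj κ) (A.image f) (B.image g) := by
  by_cases he : A.image f = B.image g
  · exact Or.inr he
  · refine Or.inl ⟨he, ?_, ?_⟩
    · intro x hx
      obtain ⟨a, ha, rfl⟩ := Finset.mem_image.mp hx
      obtain ⟨b, hb, hab⟩ := h1 a ha
      exact ⟨g b, Finset.mem_image_of_mem g hb, hab⟩
    · intro y hy
      obtain ⟨b, hb, rfl⟩ := Finset.mem_image.mp hy
      obtain ⟨a, ha, hab⟩ := h2 b hb
      exact ⟨f a, Finset.mem_image_of_mem f ha, hab⟩

private lemma connImg {X : Type*} [DecidableEq X] (κ : X → X → Prop) (A : Finset X)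
    (f : X → X) (hA : ConnIn κ (A : Set X))
    (hf : ∀ x x', κ x x' → AdjEq κ (f x) (f x')) :
    ConnIn κ ((A.image f : Finset X) : Set X) := by
  intro a ha b hb
  obtain ⟨x, hx, rfl⟩ := Finset.mem_image.mp (Finset.mem_coe.mp ha)
  obtain ⟨y, hy, rfl⟩ := Finset.mem_image.mp (Finset.mem_coe.mp hb)
  obtain ⟨n, p, hp0, hpn, hpmem, hpadj⟩ :=
    hA x (Finset.mem_coe.mpr hx) y (Finset.mem_coe.mpr hy)
  refine ⟨n, f ∘ p, by simp [hp0], by simp [hpn], ?_, ?_⟩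
  · intro i hi
    exact Finset.mem_coe.mpr (Finset.mem_image_of_mem f (Finset.mem_coe.mp (hpmem i hi)))
  · intro i hi
    rcases hpadj i hi with hadj | heq
    · exact hf _ _ hadj
    · exact Or.inr (congrArg f heq)

/-- if `(X,κ)` is contractible, then `(2^X,κ')` and `K(X,κ')` are
contractible. -/
theorem stmt4 {X : Type*} [DecidableEq X]
    (κ : X → X → Prop)
    (hκsymm : ∀ x y, κ x y → κ y x) (hκirr : ∀ x, ¬ κ x x)
    (h : ContractibleOn κ (Set.univ : Set X)) :
    ContractibleOn (HyperAdj κ) (TwoX X) ∧ ContractibleOn (HyperAdj κ) (KSet κ) := by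
  obtain ⟨c, -, m, F, -, hF0, hFm, htrack, hslice⟩ := h
  have hF0' : ∀ x, F x 0 = x := fun x => hF0 x (Set.mem_univ x)
  have hFm' : ∀ x, F x m = c := fun x => hFm x (Set.mem_univ x)
  have htrack' : ∀ x, ∀ t < m, AdjEq κ (F x t) (F x (t + 1)) :=
    fun x => htrack x (Set.mem_univ x)
  have hslice' : ∀ t ≤ m, ∀ x x', κ x x' → AdjEq κ (F x t) (F x' t) :=
    fun t ht x x' hxx' => hslice t ht x (Set.mem_univ x) x' (Set.mem_univ x') hxx'
  set G : Finset X → ℕ → Finset X := fun A t => A.image (fun x => F x t) with hG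
  have hG0 : ∀ A : Finset X, G A 0 = A := by
    intro A
    have : (fun x => F x 0) = id := funext fun x => hF0' x
    simp [hG, this]
  have hGm : ∀ A : Finset X, A.Nonempty → G A m = {c} := by
    intro A hA
    have : (fun x => F x m) = fun _ => c := funext fun x => hFm' x
    rw [hG]
    simp only [this]
    exact Finset.image_const hA c
  have hGtrack : ∀ A : Finset X, ∀ t < m, AdjEq (HyperAdj κ) (G A t) (G A (t + 1)) := by
    intro A t ht
    refine imgAdj κ A A _ _ ?_ ?_
    · exact fun a ha => ⟨a, ha, htrack' a t ht⟩
    · exact fun a ha => ⟨a, ha, adjEqSymm hκsymm (htrack' a t ht)⟩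
  have hGslice : ∀ t ≤ m, ∀ A B : Finset X, HyperAdj κ A B →
      AdjEq (HyperAdj κ) (G A t) (G B t) := by
    intro t ht A B ⟨hne, h1, h2⟩
    refine imgAdj κ A B _ _ ?_ ?_
    · intro a ha
      obtain ⟨b, hb, hab⟩ := h1 a ha
      refine ⟨b, hb, ?_⟩
      rcases hab with hadj | rfl
      · exact hslice' t ht a b hadj
      · exact Or.inr rfl
    · intro b hb
      obtain ⟨a, ha, hba⟩ := h2 b hb
      refine ⟨a, ha, ?_⟩
      rcases hba with hadj | rfl
      · exact hslice' t ht b a hadj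
      · exact Or.inr rfl
  have hGne : ∀ A : Finset X, A.Nonempty → ∀ t, (G A t).Nonempty := by
    intro A hA t
    exact hA.image _
  constructor
  · refine ⟨{c}, Finset.singleton_nonempty c, m, G, ?_, ?_, ?_, ?_, ?_⟩
    · exact fun A hA t _ => hGne A hA t
    · exact fun A _ => hG0 A
    · exact fun A hA => hGm A hA
    · exact fun A _ t ht => hGtrack A t ht
    · exact fun t ht A _ B _ hAB => hGslice t ht A B hAB
  · refine ⟨{c}, ⟨Finset.singleton_nonempty c, ?_⟩, m, G, ?_, ?_, ?_, ?_, ?_⟩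
    · intro a ha b hb
      refine ⟨0, fun _ => c, ?_, ?_, ?_, ?_⟩
      · have : a = c := by simpa using ha
        exact this.symm
      · have : b = c := by simpa using hb
        exact this.symm
      · intro i _; simp
      · intro i hi; omega
    · intro A hA t ht
      refine ⟨hGne A hA.1 t, ?_⟩
      exact connImg κ A _ hA.2 (fun x x' hxx' => hslice' t ht x x' hxx')
    · exact fun A _ => hG0 A
    · exact fun A hA => hGm A hA.1
    · exact fun A _ t ht => hGtrack A t ht
    · exact fun t ht A _ B _ hAB => hGslice t ht A B hAB
end

section
/- Let (X,κ) and (Y,λ) be digital images and let f,g ∈ Y^X be (κ,λ)-continuous functions. Then f and g are homotopic if and only if f and g belong to the same connected component of the graph (Y^X, Φ(κ,λ)). -/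
/-- continuous `f, g : X → Y` are homotopic iff they belong to the same
connected component of the function graph `(Y^X, Φ(κ,lam))`. -/
theorem stmt6 {X Y : Type*}
    (κ : X → X → Prop) (lam : Y → Y → Prop)
    (hκsymm : ∀ x y, κ x y → κ y x) (hκirr : ∀ x, ¬ κ x x)
    (hlsymm : ∀ x y, lam x y → lam y x) (hlirr : ∀ y, ¬ lam y y)
    (f g : X → Y) (hf : DigCont κ lam f) (hg : DigCont κ lam g) :
    Htpy κ lam f g ↔ Chain (PhiAdj lam) {h : X → Y | DigCont κ lam h} f g := by
  constructor
  · rintro ⟨m, F, h0, hm, htr, hsl⟩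
    refine ⟨m, fun t x => F x t, funext h0, funext hm, fun i hi => hsl i hi, fun i hi => ?_⟩
    by_cases h : (fun x => F x i) = fun x => F x (i + 1)
    · exact Or.inr h
    · exact Or.inl ⟨h, fun x => htr x i hi⟩
  · rintro ⟨n, p, h0, hn, hmem, hadj⟩
    refine ⟨n, fun x t => p t x, fun x => congrFun h0 x, fun x => congrFun hn x, ?_, ?_⟩
    · intro x t ht
      rcases hadj t ht with h | h
      · exact h.2 x
      · exact Or.inr (congrFun h x)
    · intro t ht
      exact hmem t ht
end

section
/- Let (S_n,κ) be a cyclic graph with n > 4 points x_0,…,x_{n-1}, where x_i ⟷_κ x_j if and only if |i - j| ∈ {1, n-1}, and for 0 ≤ j < n let r_j : S_n → S_n be the rotation r_j(x_i) = x_{(i+j) mod n}. Then every two rotations r_j and r_k are κ-homotopic, but for j ≠ k the rotations r_j and r_k do not belong to the same connected component of (S_n^{S_n}, Ψ(κ,κ)). -/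
/-- The adjacency of the cyclic graph on `ZMod n` (`x_i ⟷ x_j` iff
`|i-j| ∈ {1, n-1}`, i.e. the indices differ by `±1` mod `n`). -/
def cycAdj (n : ℕ) : ZMod n → ZMod n → Prop := fun a b => b = a + 1 ∨ a = b + 1

lemma cast_ne_zero_of_lt (n : ℕ) (hn : 4 < n) {k : ℕ} (h0 : 0 < k) (hk : k < n) :
    (k : ZMod n) ≠ 0 := by
  haveI : NeZero n := ⟨by omega⟩
  intro h
  have hv := ZMod.val_cast_of_lt hk
  rw [h] at hv
  simp [ZMod.val_zero] at hv
  omega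

lemma dzero (n : ℕ) (hn : 4 < n) (d : ZMod n)
    (h1 : d = 1 ∨ d = -1 ∨ d = 0)
    (h2 : d = 2 ∨ d = 0 ∨ d = 1)
    (h3 : d = 0 ∨ d = -2 ∨ d = -1) : d = 0 := by
  have e1 : (1 : ZMod n) ≠ 0 := by
    have := cast_ne_zero_of_lt n hn (k := 1) (by norm_num) (by omega)
    exact_mod_cast this
  have e2 : (2 : ZMod n) ≠ 0 := by
    have := cast_ne_zero_of_lt n hn (k := 2) (by norm_num) (by omega)
    exact_mod_cast this
  have e3 : (3 : ZMod n) ≠ 0 := by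
    have := cast_ne_zero_of_lt n hn (k := 3) (by norm_num) (by omega)
    exact_mod_cast this
  have e4 : (4 : ZMod n) ≠ 0 := by
    have := cast_ne_zero_of_lt n hn (k := 4) (by norm_num) (by omega)
    exact_mod_cast this
  rcases h1 with ha | ha | ha <;> rcases h2 with hb | hb | hb <;> rcases h3 with hc | hc | hc <;>
    first
      | assumption
      | (exact absurd (show (1 : ZMod n) = 0 by
          first
            | linear_combination ha - hb | linear_combination hb - ha
            | linear_combination ha - hc | linear_combination hc - ha
            | linear_combination hb - hc | linear_combination hc - hb) e1)
      | (exact absurd (show (2 : ZMod n) = 0 by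
          first
            | linear_combination ha - hb | linear_combination hb - ha
            | linear_combination ha - hc | linear_combination hc - ha
            | linear_combination hb - hc | linear_combination hc - hb) e2)
      | (exact absurd (show (3 : ZMod n) = 0 by
          first
            | linear_combination ha - hb | linear_combination hb - ha
            | linear_combination ha - hc | linear_combination hc - ha
            | linear_combination hb - hc | linear_combination hc - hb) e3)
      | (exact absurd (show (4 : ZMod n) = 0 by
          first
            | linear_combination ha - hb | linear_combination hb - ha
            | linear_combination ha - hc | linear_combination hc - ha
            | linear_combination hb - hc | linear_combination hc - hb) e4)

lemma mem3 {n : ℕ} {a b : ZMod n} (h : AdjEq (cycAdj n) a b) :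
    b = a + 1 ∨ b = a - 1 ∨ b = a := by
  rcases h with (h | h) | h
  · exact Or.inl h
  · exact Or.inr (Or.inl (by rw [h]; ring))
  · exact Or.inr (Or.inr h.symm)

lemma rot_isolated {n : ℕ} (hn : 4 < n) (j : ZMod n) (g : ZMod n → ZMod n) :
    ¬ PsiAdj (cycAdj n) (cycAdj n) (fun i => i + j) g := by
  rintro ⟨hne, h⟩
  apply hne
  funext x
  have A1 : AdjEq (cycAdj n) (x + j) (g x) := h x x (Or.inr rfl)
  have A2 : AdjEq (cycAdj n) (x + 1 + j) (g x) := h (x + 1) x (Or.inl (Or.inr rfl))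
  have A3 : AdjEq (cycAdj n) (x - 1 + j) (g x) := h (x - 1) x (Or.inl (Or.inl (by ring)))
  have h1 : g x - (x + j) = 1 ∨ g x - (x + j) = -1 ∨ g x - (x + j) = 0 := by
    rcases mem3 A1 with h' | h' | h'
    · exact Or.inl (by rw [h']; ring)
    · exact Or.inr (Or.inl (by rw [h']; ring))
    · exact Or.inr (Or.inr (by rw [h']; ring))
  have h2 : g x - (x + j) = 2 ∨ g x - (x + j) = 0 ∨ g x - (x + j) = 1 := by
    rcases mem3 A2 with h' | h' | h'
    · exact Or.inl (by rw [h']; ring)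
    · exact Or.inr (Or.inl (by rw [h']; ring))
    · exact Or.inr (Or.inr (by rw [h']; ring))
  have h3 : g x - (x + j) = 0 ∨ g x - (x + j) = -2 ∨ g x - (x + j) = -1 := by
    rcases mem3 A3 with h' | h' | h'
    · exact Or.inl (by rw [h']; ring)
    · exact Or.inr (Or.inl (by rw [h']; ring))
    · exact Or.inr (Or.inr (by rw [h']; ring))
  have hd := dzero n hn _ h1 h2 h3
  show x + j = g x
  linear_combination -hd

/-- in the cyclic graph `S_n` (`n > 4`) all rotations
`r_j(x_i) = x_{i+j}` are homotopic to each other, but distinct rotations never lie in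
the same connected component of `(S_n^{S_n}, Ψ)`. -/
theorem stmt7 (n : ℕ) (hn : 4 < n) :
    (∀ j k : ZMod n,
      Htpy (cycAdj n) (cycAdj n) (fun i => i + j) (fun i => i + k)) ∧
    (∀ j k : ZMod n, j ≠ k →
      ¬ Chain (PsiAdj (cycAdj n) (cycAdj n))
          {f : ZMod n → ZMod n | DigCont (cycAdj n) (cycAdj n) f}
          (fun i => i + j) (fun i => i + k)) := by
  haveI : NeZero n := ⟨by omega⟩
  constructor
  · intro j k
    refine ⟨(k - j).val, fun x t => x + j + (t : ZMod n), ?_, ?_, ?_, ?_⟩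
    · intro x; simp
    · intro x
      have h : (((k - j).val : ℕ) : ZMod n) = k - j := by
        simp [ZMod.natCast_val, ZMod.cast_id]
      show x + j + (((k - j).val : ℕ) : ZMod n) = x + k
      rw [h]; ring
    · intro x t ht
      exact Or.inl (Or.inl (by push_cast; ring))
    · intro t ht x x' hxx'
      rcases hxx' with h | h
      · exact Or.inl (Or.inl (by rw [h]; ring))
      · exact Or.inl (Or.inr (by rw [h]; ring))
  · intro j k hjk ⟨m, p, hp0, hpm, hmem, hadj⟩
    have key : ∀ i ≤ m, p i = fun x => x + j := by
      intro i hi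
      induction i with
      | zero => exact hp0
      | succ i ih =>
        have hi' : i ≤ m := by omega
        have ih' := ih hi'
        rcases hadj i (by omega) with h | h
        · rw [ih'] at h
          exact absurd h (rot_isolated hn j (p (i + 1)))
        · rw [← h]; exact ih'
    have := (key m le_rfl).symm.trans hpm
    apply hjk
    have := congrFun this 0
    simpa using this
end

section
/- Let (X,κ) and (Y,λ) be digital images and let W ⊂ Y be a λ-retract of Y. Then (W^X, Φ(κ,λ)) is a retract of (Y^X, Φ(κ,λ)); that is, there is a Φ(κ,λ)-continuous map ρ : Y^X → W^X with ρ(f) = f for every f ∈ Y^X whose image lies in W. -/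
/-- if `W ⊆ Y` is a `lam`-retract of `Y`, then the function graph
`(W^X, Φ(κ,lam))` is a retract of `(Y^X, Φ(κ,lam))`. -/
theorem stmt8 {X Y : Type*}
    (κ : X → X → Prop) (lam : Y → Y → Prop)
    (hκsymm : ∀ x y, κ x y → κ y x) (hκirr : ∀ x, ¬ κ x x)
    (hlsymm : ∀ x y, lam x y → lam y x) (hlirr : ∀ y, ¬ lam y y)
    (W : Set Y)
    (hW : ∃ r : Y → Y, DigCont lam lam r ∧ (∀ y, r y ∈ W) ∧ ∀ w ∈ W, r w = w) :
    ∃ ρ : (X → Y) → (X → Y),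
      ContOn (PhiAdj lam) (PhiAdj lam)
        {f : X → Y | DigCont κ lam f}
        {f : X → Y | DigCont κ lam f ∧ ∀ x, f x ∈ W} ρ ∧
      ∀ f : X → Y, DigCont κ lam f → (∀ x, f x ∈ W) → ρ f = f := by
  obtain ⟨r, hrc, hrW, hrid⟩ := hW
  refine ⟨fun f => r ∘ f, ⟨?_, ?_⟩, ?_⟩
  · intro f hf
    refine ⟨fun x x' hxx' => ?_, fun x => hrW (f x)⟩
    rcases hf x x' hxx' with h | h
    · exact hrc _ _ h
    · exact Or.inr (by simp [Function.comp, h])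
  · intro f hf g hg ⟨hne, hadj⟩
    by_cases heq : (r ∘ f) = (r ∘ g)
    · exact Or.inr heq
    · refine Or.inl ⟨heq, fun x => ?_⟩
      rcases hadj x with h | h
      · exact hrc _ _ h
      · exact Or.inr (by simp [Function.comp, h])
  · intro f _ hfW
    funext x
    exact hrid _ (hfW x)
end

section
/- Let (X,κ) and (Y,λ) be digital images and let f,g ∈ Y^X with f Φ(κ,λ)-adjacent to g. Then for every A ∈ 2^X, the images satisfy f(A) ⟷≤_{λ'} g(A) in 2^Y (i.e., f(A) and g(A) are λ'-adjacent or equal). -/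
/-- if continuous `f, g ∈ Y^X` are `Φ(κ,lam)`-adjacent, then for every
`A ∈ 2^X` the images satisfy `f(A) ⟷≤_{lam'} g(A)` in `2^Y`. -/
theorem stmt9 {X Y : Type*} [DecidableEq Y]
    (κ : X → X → Prop) (lam : Y → Y → Prop)
    (hκsymm : ∀ x y, κ x y → κ y x) (hκirr : ∀ x, ¬ κ x x)
    (hlsymm : ∀ x y, lam x y → lam y x) (hlirr : ∀ y, ¬ lam y y)
    (f g : X → Y) (hf : DigCont κ lam f) (hg : DigCont κ lam g)
    (hfg : PhiAdj lam f g) :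
    ∀ A ∈ TwoX X, AdjEq (HyperAdj lam) (A.image f) (A.image g) := by
  intro A _
  by_cases h : A.image f = A.image g
  · exact Or.inr h
  · refine Or.inl ⟨h, ?_, ?_⟩
    · intro y hy
      obtain ⟨a, ha, rfl⟩ := Finset.mem_image.mp hy
      exact ⟨g a, Finset.mem_image_of_mem g ha, hfg.2 a⟩
    · intro y hy
      obtain ⟨a, ha, rfl⟩ := Finset.mem_image.mp hy
      refine ⟨f a, Finset.mem_image_of_mem f ha, ?_⟩
      rcases hfg.2 a with h' | h'
      · exact Or.inl (hlsymm _ _ h')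
      · exact Or.inr h'.symm
end

section
/- Let (W,κ), (X,λ), and (Y,μ) be digital images and let f,g : X → Y be (λ,μ)-continuous maps that are (λ,μ)-homotopic. Then the induced maps f_*, g_* : (X^W, Φ(κ,λ)) → (Y^W, Φ(κ,μ)), defined by f_*(F) = f∘F and g_*(F) = g∘F, are (Φ(κ,λ), Φ(κ,μ))-continuous and are homotopic. -/
/-- Pointwise adjacency-or-equality lifts to `AdjEq (PhiAdj mu)`. -/
lemma adjEq_phi {W Y : Type*} (mu : Y → Y → Prop) (a b : W → Y)
    (h : ∀ w, AdjEq mu (a w) (b w)) : AdjEq (PhiAdj mu) a b := by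
  by_cases he : a = b
  · exact Or.inr he
  · exact Or.inl ⟨he, h⟩

/-- if `f, g : X → Y` are `(lam,mu)`-homotopic continuous maps, then the
induced maps `F ↦ f∘F`, `F ↦ g∘F` from `(X^W, Φ(κ,lam))` to `(Y^W, Φ(κ,mu))` are
continuous and homotopic. -/
theorem stmt10 {W X Y : Type*}
    (κ : W → W → Prop) (lam : X → X → Prop) (mu : Y → Y → Prop)
    (hκsymm : ∀ x y, κ x y → κ y x) (hκirr : ∀ x, ¬ κ x x)
    (hlsymm : ∀ x y, lam x y → lam y x) (hlirr : ∀ x, ¬ lam x x)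
    (hmsymm : ∀ x y, mu x y → mu y x) (hmirr : ∀ y, ¬ mu y y)
    (f g : X → Y) (hf : DigCont lam mu f) (hg : DigCont lam mu g)
    (h : Htpy lam mu f g) :
    ContOn (PhiAdj lam) (PhiAdj mu)
      {F : W → X | DigCont κ lam F} {G : W → Y | DigCont κ mu G}
      (fun F => f ∘ F) ∧
    ContOn (PhiAdj lam) (PhiAdj mu)
      {F : W → X | DigCont κ lam F} {G : W → Y | DigCont κ mu G}
      (fun F => g ∘ F) ∧
    HtpyOn (PhiAdj lam) (PhiAdj mu)
      {F : W → X | DigCont κ lam F} {G : W → Y | DigCont κ mu G}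
      (fun F => f ∘ F) (fun F => g ∘ F) := by
  obtain ⟨m, H, H0, Hm, Htr, Hsl⟩ := h
  have cont : ∀ h : X → Y, DigCont lam mu h →
      ContOn (PhiAdj lam) (PhiAdj mu)
        {F : W → X | DigCont κ lam F} {G : W → Y | DigCont κ mu G}
        (fun F => h ∘ F) := by
    intro h hh
    constructor
    · intro F hF w w' hw
      rcases hF w w' hw with h1 | h1
      · exact hh _ _ h1
      · exact Or.inr (by simp [Function.comp, h1])
    · intro F hF F' hF' ⟨hne, hadj⟩
      refine adjEq_phi mu _ _ fun w => ?_
      rcases hadj w with h1 | h1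
      · exact hh _ _ h1
      · exact Or.inr (by simp [Function.comp, h1])
  refine ⟨cont f hf, cont g hg, m, fun F t => fun w => H (F w) t, ?_, ?_, ?_, ?_, ?_⟩
  · intro F hF t ht w w' hw
    rcases hF w w' hw with h1 | h1
    · exact Hsl t ht _ _ h1
    · exact Or.inr (by show H _ t = H _ t; rw [h1])
  · intro F hF; funext w; exact H0 (F w)
  · intro F hF; funext w; exact Hm (F w)
  · intro F hF t ht
    exact adjEq_phi mu _ _ fun w => Htr (F w) t ht
  · intro t ht F hF F' hF' ⟨hne, hadj⟩
    refine adjEq_phi mu _ _ fun w => ?_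
    rcases hadj w with h1 | h1
    · exact Hsl t ht _ _ h1
    · exact Or.inr (by show H _ t = H _ t; rw [h1])
end

section
/- Let (X,κ) and (Y,λ) be digital images having the same homotopy type. Then (X^X, Φ(κ,κ)) and (Y^Y, Φ(λ,λ)) have the same homotopy type. -/
section Aux
variable {X Y : Type*} {κ : X → X → Prop} {lam : Y → Y → Prop}

lemma adjEq_of_cont {f : X → Y} (hf : DigCont κ lam f) {a b : X} (h : AdjEq κ a b) :
    AdjEq lam (f a) (f b) := by
  rcases h with h | rfl
  · exact hf _ _ h
  · exact Or.inr rfl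

lemma digCont_comp {Z : Type*} {μ : Z → Z → Prop} {f : X → Y} {g : Y → Z}
    (hg : DigCont lam μ g) (hf : DigCont κ lam f) : DigCont κ μ (fun x => g (f x)) :=
  fun x x' h => adjEq_of_cont hg (hf x x' h)

lemma adjEq_phi_of_pointwise {φ φ' : X → X}
    (h : ∀ x, AdjEq κ (φ x) (φ' x)) : AdjEq (PhiAdj κ) φ φ' := by
  by_cases heq : φ = φ'
  · exact Or.inr heq
  · exact Or.inl ⟨heq, h⟩

/-- Key lemma: a homotopy `g∘f ≃ id` on `X` induces a `Φ`-homotopy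
`(φ ↦ g∘f∘φ∘g∘f) ≃ id` on continuous self-maps of `X`. -/
lemma key_htpy {f : X → Y} {g : Y → X}
    (hf : DigCont κ lam f) (hg : DigCont lam κ g)
    (H : HtpyOn κ κ Set.univ Set.univ (fun x => g (f x)) id) :
    HtpyOn (PhiAdj κ) (PhiAdj κ) {φ : X → X | DigCont κ κ φ} {φ : X → X | DigCont κ κ φ}
      (fun φ => fun x => g (f (φ (g (f x))))) id := by
  obtain ⟨m, F, _, h0, hm, htrack, hslice⟩ := H
  have h0' : ∀ a, F a 0 = g (f a) := fun a => h0 a trivial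
  have hm' : ∀ a, F a m = a := fun a => hm a trivial
  have htrack' : ∀ a, ∀ t < m, AdjEq κ (F a t) (F a (t + 1)) :=
    fun a => htrack a trivial
  have hsl : ∀ t ≤ m, DigCont κ κ (fun x => F x t) :=
    fun t ht x x' hxx' => hslice t ht x trivial x' trivial hxx'
  have hslAdj : ∀ t ≤ m, ∀ a a', AdjEq κ a a' → AdjEq κ (F a t) (F a' t) :=
    fun t ht a a' h => adjEq_of_cont (hsl t ht) h
  refine ⟨2 * m, fun φ t => fun x => F (φ (F x (min t m))) (t - m),
    ?_, ?_, ?_, ?_, ?_⟩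
  · -- slices are continuous maps X → X
    intro φ hφ t ht
    have h1 : min t m ≤ m := min_le_right _ _
    have h2 : t - m ≤ m := by omega
    exact digCont_comp (hsl _ h2) (digCont_comp hφ (hsl _ h1))
  · intro φ _
    funext x
    simp [h0']
  · intro φ _
    funext x
    have e1 : min (2 * m) m = m := by omega
    have e2 : 2 * m - m = m := by omega
    simp only [e1, e2, hm', id]
  · -- tracks
    intro φ hφ t ht
    apply adjEq_phi_of_pointwise
    intro x
    by_cases hc : t < m
    · have e1 : min t m = t := by omega
      have e2 : min (t + 1) m = t + 1 := by omega
      have e3 : t - m = 0 := by omega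
      have e4 : t + 1 - m = 0 := by omega
      simp only [e1, e2, e3, e4]
      exact hslAdj 0 (Nat.zero_le _) _ _
        (adjEq_of_cont hφ (htrack' x t hc))
    · have e1 : min t m = m := by omega
      have e2 : min (t + 1) m = m := by omega
      have e3 : t + 1 - m = (t - m) + 1 := by omega
      simp only [e1, e2, e3, hm']
      exact htrack' (φ x) (t - m) (by omega)
  · -- slice continuity w.r.t. Φ-adjacency
    intro t ht φ hφ φ' hφ' hadj
    apply adjEq_phi_of_pointwise
    intro x
    have h2 : t - m ≤ m := by omega
    exact hslAdj _ h2 _ _ (hadj.2 (F x (min t m)))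

end Aux

/-- if `(X,κ)` and `(Y,lam)` have the same homotopy type, then so do the
function graphs `(X^X, Φ(κ,κ))` and `(Y^Y, Φ(lam,lam))`. -/
theorem stmt11 {X Y : Type*}
    (κ : X → X → Prop) (lam : Y → Y → Prop)
    (hκsymm : ∀ x y, κ x y → κ y x) (hκirr : ∀ x, ¬ κ x x)
    (hlsymm : ∀ x y, lam x y → lam y x) (hlirr : ∀ y, ¬ lam y y)
    (h : HtpyEquivOn κ lam (Set.univ : Set X) (Set.univ : Set Y)) :
    HtpyEquivOn (PhiAdj κ) (PhiAdj lam)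
      {f : X → X | DigCont κ κ f} {g : Y → Y | DigCont lam lam g} := by
  obtain ⟨f, g, ⟨_, hfc⟩, ⟨_, hgc⟩, HX, HY⟩ := h
  have hf : DigCont κ lam f := fun x x' hx => hfc x trivial x' trivial hx
  have hg : DigCont lam κ g := fun y y' hy => hgc y trivial y' trivial hy
  refine ⟨fun φ => fun y => f (φ (g y)), fun ψ => fun x => g (ψ (f x)), ?_, ?_, ?_, ?_⟩
  · constructor
    · intro φ hφ
      exact digCont_comp hf (digCont_comp hφ hg)
    · intro φ _ φ' _ hadj
      exact adjEq_phi_of_pointwise fun y =>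
        adjEq_of_cont hf (hadj.2 (g y))
  · constructor
    · intro ψ hψ
      exact digCont_comp hg (digCont_comp hψ hf)
    · intro ψ _ ψ' _ hadj
      exact adjEq_phi_of_pointwise fun x =>
        adjEq_of_cont hg (hadj.2 (f x))
  · exact key_htpy hf hg HX
  · exact key_htpy hg hf HY
end

section
/- Let (X,κ) be a digital image and let W be a nonempty κ'-connected subset of K(X,κ'). Then W' = ⋃_{Y ∈ W} Y is a κ-connected subset of X. -/
lemma chain_concat {A : Type*} {α : A → A → Prop} {S : Set A} {a b c : A}
    (h1 : Chain α S a b) (h2 : Chain α S b c) : Chain α S a c := by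
  obtain ⟨n, p, hp0, hpn, hpS, hpadj⟩ := h1
  obtain ⟨m, q, hq0, hqm, hqS, hqadj⟩ := h2
  refine ⟨n + m, fun i => if i < n then p i else q (i - n), ?_, ?_, ?_, ?_⟩
  · by_cases h : 0 < n
    · simp [h, hp0]
    · have : n = 0 := by omega
      simp [this, hq0, ← hpn, this, ← hp0]
  · have : ¬ (n + m < n) := by omega
    simp [this, hqm]
  · intro i hi
    by_cases h : i < n
    · simp only [h, if_pos]; exact hpS i (le_of_lt h)
    · simp only [h, if_neg, if_false]; exact hqS (i - n) (by omega)
  · intro i hi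
    by_cases h : i + 1 < n
    · have h' : i < n := by omega
      simp only [h, h', if_pos]; exact hpadj i h'
    · by_cases h' : i < n
      · have hin : i + 1 = n := by omega
        simp only [h, h', if_pos, if_neg, if_false]
        have : q (i + 1 - n) = p (i+1) := by rw [hin]; simp [hq0, ← hpn]
        rw [this]; exact hpadj i h'
      · simp only [h, h', if_neg, if_false]
        have : i + 1 - n = (i - n) + 1 := by omega
        rw [this]; exact hqadj (i - n) (by omega)

/-- if `W` is a nonempty `κ'`-connected subset of `K(X,κ')`, then the
union `W' = ⋃_{Y ∈ W} Y` is a `κ`-connected subset of `X`. -/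
theorem stmt12 {X : Type*}
    (κ : X → X → Prop)
    (hκsymm : ∀ x y, κ x y → κ y x) (hκirr : ∀ x, ¬ κ x x)
    (W : Set (Finset X)) (hWK : W ⊆ KSet κ) (hWne : W.Nonempty)
    (hWconn : ConnIn (HyperAdj κ) W) :
    ConnIn κ (⋃ A ∈ W, (A : Set X)) := by
  intro a ha b hb
  simp only [Set.mem_iUnion] at ha hb
  obtain ⟨A, hAW, haA⟩ := ha
  obtain ⟨B, hBW, hbB⟩ := hb
  set U : Set X := ⋃ A ∈ W, (A : Set X) with hU
  have hsub : ∀ C ∈ W, (C : Set X) ⊆ U := by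
    intro C hC x hx
    exact Set.mem_iUnion.2 ⟨C, Set.mem_iUnion.2 ⟨hC, hx⟩⟩
  have chain_in : ∀ C ∈ W, ∀ x ∈ (C : Set X), ∀ y ∈ (C : Set X), Chain κ U x y := by
    intro C hC x hx y hy
    obtain ⟨-, hconn⟩ := hWK hC
    obtain ⟨n, p, h0, hn, hS, hadj⟩ := hconn x hx y hy
    exact ⟨n, p, h0, hn, fun i hi => hsub C hC (hS i hi), hadj⟩
  obtain ⟨n, p, hp0, hpn, hpW, hpadj⟩ := hWconn A hAW B hBW
  suffices H : ∀ k ≤ n, ∀ x ∈ ((p k : Finset X) : Set X), Chain κ U a x by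
    obtain ⟨N, q, hq⟩ := H n le_rfl b (by rw [hpn]; exact_mod_cast hbB)
    exact ⟨N, q, hq⟩
  intro k
  induction k with
  | zero =>
    intro _ x hx
    exact chain_in A hAW a (by exact_mod_cast haA) x (by rwa [hp0] at hx)
  | succ k ih =>
    intro hk x hx
    have hadj := hpadj k (by omega)
    rcases hadj with hH | heq
    · obtain ⟨-, -, hba⟩ := hH
      obtain ⟨y, hy, hyx⟩ := hba x (by exact_mod_cast hx)
      have h1 : Chain κ U a y := ih (by omega) y (by exact_mod_cast hy)
      have hxy : AdjEq κ y x := by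
        rcases hyx with h | h
        · exact Or.inl (hκsymm _ _ h)
        · exact Or.inr h.symm
      refine chain_concat h1 ⟨1, fun i => if i = 0 then y else x, by simp, by simp, ?_, ?_⟩
      · intro i hi
        interval_cases i
        · simpa using hsub _ (hpW k (by omega)) (by exact_mod_cast hy)
        · simpa using hsub _ (hpW (k+1) (by omega)) hx
      · intro i hi
        interval_cases i
        simpa using hxy
    · exact ih (by omega) x (by rwa [heq])
end

section
/- Let C₀ and C₁ be distinct connected components of a digital image (X,κ), and let A_i ∈ K(C_i,κ') for i ∈ {0,1} (i.e., A_i is a nonempty finite κ-connected subset of C_i). Then A₀ and A₁ lie in distinct connected components of the graph K(X,κ'). -/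
section ChainLemmas
variable {A : Type*} {α : A → A → Prop} {S : Set A}

lemma chain_refl {a : A} (ha : a ∈ S) : Chain α S a a :=
  ⟨0, fun _ => a, rfl, rfl, fun _ _ => ha, fun i hi => absurd hi (Nat.not_lt_zero i)⟩

lemma chain_step {a b : A} (ha : a ∈ S) (hb : b ∈ S) (h : AdjEq α a b) :
    Chain α S a b := by
  refine ⟨1, fun j => if j = 0 then a else b, by simp, by simp, ?_, ?_⟩
  · intro i _; dsimp only; split <;> assumption
  · intro i hi
    interval_cases i
    simpa using h

lemma chain_trans {a b c : A} (h1 : Chain α S a b) (h2 : Chain α S b c) :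
    Chain α S a c := by
  obtain ⟨n, p, hp0, hpn, hpm, hpa⟩ := h1
  obtain ⟨m, q, hq0, hqm, hqmem, hqa⟩ := h2
  refine ⟨n + m, fun i => if i ≤ n then p i else q (i - n), by simp [hp0], ?_, ?_, ?_⟩
  · dsimp only; split
    · have hm : m = 0 := by omega
      have hn : n + m = n := by omega
      rw [hn, hpn, ← hqm, hm, hq0]
    · have : n + m - n = m := by omega
      rw [this, hqm]
  · intro i hi; dsimp only
    by_cases h : i ≤ n
    · rw [if_pos h]; exact hpm i h
    · rw [if_neg h]; exact hqmem (i - n) (by omega)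
  · intro i hi; dsimp only
    by_cases h : i < n
    · rw [if_pos (by omega : i ≤ n), if_pos (by omega : i + 1 ≤ n)]
      exact hpa i h
    · have key : AdjEq α (q (i - n)) (q (i + 1 - n)) := by
        have e : i + 1 - n = (i - n) + 1 := by omega
        rw [e]
        exact hqa (i - n) (by omega)
      rw [if_neg (by omega : ¬ (i + 1 ≤ n))]
      by_cases h' : i ≤ n
      · have hin : i = n := by omega
        subst hin
        rw [if_pos h', hpn]
        have hb : q (i - i) = b := by simp [hq0]
        rwa [hb] at key
      · rw [if_neg h']
        exact key

lemma chain_symm (hsymm : ∀ x y, α x y → α y x) {a b : A}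
    (h : Chain α S a b) : Chain α S b a := by
  obtain ⟨n, p, hp0, hpn, hpm, hpa⟩ := h
  refine ⟨n, fun i => p (n - i), by simp [hpn], by simp [hp0], ?_, ?_⟩
  · intro i _; exact hpm (n - i) (by omega)
  · intro i hi; dsimp only
    have := hpa (n - i - 1) (by omega)
    have e1 : n - i - 1 + 1 = n - i := by omega
    have e2 : n - (i + 1) = n - i - 1 := by omega
    rw [e1] at this
    rw [e2]
    rcases this with h' | h'
    · exact Or.inl (hsymm _ _ h')
    · exact Or.inr h'.symm

lemma chain_mono {T : Set A} (hST : S ⊆ T) {a b : A} (h : Chain α S a b) :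
    Chain α T a b := by
  obtain ⟨n, p, hp0, hpn, hpm, hpa⟩ := h
  exact ⟨n, p, hp0, hpn, fun i hi => hST (hpm i hi), hpa⟩

lemma connIn_chain (h : ConnIn α S) {a b : A} (ha : a ∈ S) (hb : b ∈ S) :
    Chain α S a b := h a ha b hb

end ChainLemmas

/-- if `C₀, C₁` are distinct connected components of `(X,κ)` and
`A_i ∈ K(C_i, κ')`, then `A₀` and `A₁` lie in distinct connected components of
`K(X,κ')`. -/
theorem stmt13 {X : Type*}
    (κ : X → X → Prop)
    (hκsymm : ∀ x y, κ x y → κ y x) (hκirr : ∀ x, ¬ κ x x)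
    (C₀ C₁ : Set X)
    (hC₀ : IsComponentIn κ Set.univ C₀) (hC₁ : IsComponentIn κ Set.univ C₁)
    (hCne : C₀ ≠ C₁)
    (A₀ A₁ : Finset X)
    (hA₀K : A₀ ∈ KSet κ) (hA₀C : (A₀ : Set X) ⊆ C₀)
    (hA₁K : A₁ ∈ KSet κ) (hA₁C : (A₁ : Set X) ⊆ C₁) :
    ∀ D₀ D₁ : Set (Finset X),
      IsComponentIn (HyperAdj κ) (KSet κ) D₀ →
      IsComponentIn (HyperAdj κ) (KSet κ) D₁ →
      A₀ ∈ D₀ → A₁ ∈ D₁ → D₀ ≠ D₁ := by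
  intro D₀ D₁ hD₀ hD₁ hA₀D hA₁D heq
  subst heq
  -- pick base points
  obtain ⟨hA₀ne, hA₀conn⟩ := hA₀K
  obtain ⟨hA₁ne, hA₁conn⟩ := hA₁K
  obtain ⟨a₀, ha₀⟩ := hA₀ne
  obtain ⟨a₁, ha₁⟩ := hA₁ne
  -- hyperspace chain from A₀ to A₁ inside D₀
  obtain ⟨n, P, hP0, hPn, hPmem, hPadj⟩ := hD₀.2.1 A₀ hA₀D A₁ hA₁D
  have hPK : ∀ i ≤ n, P i ∈ KSet κ := fun i hi => hD₀.1 (hPmem i hi)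
  -- a₀ is chain-connected (in univ) to some point of each P i
  have key : ∀ i ≤ n, ∃ x ∈ P i, Chain κ Set.univ a₀ x := by
    intro i hi
    induction i with
    | zero => exact ⟨a₀, by rw [hP0]; exact ha₀, chain_refl (Set.mem_univ a₀)⟩
    | succ j ih =>
      obtain ⟨x, hx, hchain⟩ := ih (by omega)
      rcases hPadj j (by omega) with hadj | hadjeq
      · obtain ⟨y, hy, hxy⟩ := hadj.2.1 x hx
        exact ⟨y, hy, chain_trans hchain
          (chain_step (Set.mem_univ x) (Set.mem_univ y) hxy)⟩
      · exact ⟨x, by rw [← hadjeq]; exact hx, hchain⟩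
  obtain ⟨x, hxA₁, hxchain⟩ := key n le_rfl
  rw [hPn] at hxA₁
  -- chain from a₀ to a₁
  have hmain : Chain κ Set.univ a₀ a₁ :=
    chain_trans hxchain (chain_mono (Set.subset_univ _)
      (connIn_chain hA₁conn hxA₁ ha₁))
  -- the set of points chain-connected to a₀
  set C' : Set X := {x | Chain κ Set.univ a₀ x} with hC'
  have hprefix : ∀ x, Chain κ Set.univ a₀ x → Chain κ C' a₀ x := by
    intro x ⟨m, p, hp0, hpm, _, hpa⟩
    refine ⟨m, p, hp0, hpm, ?_, hpa⟩
    intro i hi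
    exact ⟨i, p, hp0, rfl, fun _ _ => Set.mem_univ _, fun j hj => hpa j (by omega)⟩
  have hC'conn : ConnIn κ C' := by
    intro a ha b hb
    exact chain_trans (chain_symm hκsymm (hprefix a ha)) (hprefix b hb)
  have hC₀sub : C₀ ⊆ C' := by
    intro c hc
    have ha₀C₀ : a₀ ∈ C₀ := hA₀C ha₀
    exact chain_mono (Set.subset_univ _) (connIn_chain hC₀.2.1 ha₀C₀ hc)
  have hC₁sub : C₁ ⊆ C' := by
    intro c hc
    have ha₁C₁ : a₁ ∈ C₁ := hA₁C ha₁
    exact chain_trans hmain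
      (chain_mono (Set.subset_univ _) (connIn_chain hC₁.2.1 ha₁C₁ hc))
  have h0 : C' = C₀ := hC₀.2.2 C' (Set.subset_univ _) hC'conn hC₀sub
  have h1 : C' = C₁ := hC₁.2.2 C' (Set.subset_univ _) hC'conn hC₁sub
  exact hCne (h0 ▸ h1)
end

section
/- Let F : (X,κ) ⊸ (Y,λ) be a multivalued function between digital images (assigning to each x ∈ X a nonempty finite subset F(x) ⊂ Y) that has strong continuity. Then the function F_* : (2^X,κ') → (2^Y,λ') defined by F_*(A) = ⋃_{x∈A} F(x) is (κ',λ')-continuous. -/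
/-- if the multivalued function `F : (X,κ) ⊸ (Y,lam)` (with each `F x`
a nonempty finite subset of `Y`) has strong continuity, then
`F_* : (2^X,κ') → (2^Y,lam')`, `F_*(A) = ⋃_{x ∈ A} F(x)`, is `(κ',lam')`-continuous. -/
theorem stmt17 {X Y : Type*} [DecidableEq Y]
    (κ : X → X → Prop) (lam : Y → Y → Prop)
    (hκsymm : ∀ x y, κ x y → κ y x) (hκirr : ∀ x, ¬ κ x x)
    (hlsymm : ∀ x y, lam x y → lam y x) (hlirr : ∀ y, ¬ lam y y)
    (F : X → Finset Y) (hFne : ∀ x, (F x).Nonempty)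
    (hstrong : ∀ x y, κ x y →
      (∀ p ∈ F x, ∃ q ∈ F y, AdjEq lam p q) ∧ (∀ q ∈ F y, ∃ p ∈ F x, AdjEq lam q p)) :
    ContOn (HyperAdj κ) (HyperAdj lam) (TwoX X) (TwoX Y)
      (fun A => A.biUnion F) := by
  constructor
  · intro A hA
    obtain ⟨a, ha⟩ := hA
    obtain ⟨q, hq⟩ := hFne a
    exact ⟨q, Finset.mem_biUnion.2 ⟨a, ha, hq⟩⟩
  · intro A hA B hB hAB
    obtain ⟨hne, h1, h2⟩ := hAB
    by_cases heq : A.biUnion F = B.biUnion F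
    · exact Or.inr heq
    refine Or.inl ⟨heq, ?_, ?_⟩
    · intro y hy
      obtain ⟨a, haA, hyFa⟩ := Finset.mem_biUnion.1 hy
      obtain ⟨b, hbB, hab⟩ := h1 a haA
      rcases hab with hk | rfl
      · obtain ⟨q, hqFb, hq⟩ := (hstrong a b hk).1 y hyFa
        exact ⟨q, Finset.mem_biUnion.2 ⟨b, hbB, hqFb⟩, hq⟩
      · exact ⟨y, Finset.mem_biUnion.2 ⟨a, hbB, hyFa⟩, Or.inr rfl⟩
    · intro y hy
      obtain ⟨b, hbB, hyFb⟩ := Finset.mem_biUnion.1 hy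
      obtain ⟨a, haA, hba⟩ := h2 b hbB
      rcases hba with hk | rfl
      · obtain ⟨q, hqFa, hq⟩ := (hstrong a b (hκsymm b a hk)).2 y hyFb
        exact ⟨q, Finset.mem_biUnion.2 ⟨a, haA, hqFa⟩, hq⟩
      · exact ⟨y, Finset.mem_biUnion.2 ⟨b, haA, hyFb⟩, Or.inr rfl⟩
end

section
/- Let (X,κ) be a digital image. Then K(X,κ') contains a 3-cycle (three pairwise distinct, pairwise κ'-adjacent members) if and only if (X,κ) has a non-isolated point (a point x with x ⟷_κ y for some y ∈ X). -/
/-- `K(X,κ')` contains a 3-cycle (three pairwise distinct, pairwise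
`κ'`-adjacent members) iff `(X,κ)` has a non-isolated point. -/
theorem stmt18 {X : Type*}
    (κ : X → X → Prop)
    (hκsymm : ∀ x y, κ x y → κ y x) (hκirr : ∀ x, ¬ κ x x) :
    (∃ A B C : Finset X, A ∈ KSet κ ∧ B ∈ KSet κ ∧ C ∈ KSet κ ∧
      A ≠ B ∧ B ≠ C ∧ A ≠ C ∧
      HyperAdj κ A B ∧ HyperAdj κ B C ∧ HyperAdj κ A C) ↔
    ∃ x y : X, κ x y := by
  classical
  constructor
  · rintro ⟨A, B, C, -, -, -, hAB, -, -, ⟨hne, h1, h2⟩, -, -⟩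
    by_contra hno
    push_neg at hno
    apply hne
    apply Finset.Subset.antisymm
    · intro a ha
      obtain ⟨b, hb, hab⟩ := h1 a ha
      rcases hab with h | h
      · exact absurd h (hno a b)
      · exact h ▸ hb
    · intro b hb
      obtain ⟨a, ha, hba⟩ := h2 b hb
      rcases hba with h | h
      · exact absurd h (hno b a)
      · exact h ▸ ha
  · rintro ⟨x, y, hxy⟩
    have hne : x ≠ y := fun h => hκirr x (h ▸ hxy)
    have hyx := hκsymm x y hxy
    have connS : ∀ z : X, ConnIn κ (({z} : Finset X) : Set X) := by
      intro z a ha b hb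
      simp only [Finset.coe_singleton, Set.mem_singleton_iff] at ha hb
      refine ⟨0, fun _ => z, ha.symm, hb.symm, ?_, ?_⟩
      · intro i _; simp
      · intro i h; exact absurd h (Nat.not_lt_zero i)
    have connP : ConnIn κ (({x, y} : Finset X) : Set X) := by
      intro a ha b hb
      simp only [Finset.coe_insert, Finset.coe_singleton, Set.mem_insert_iff,
        Set.mem_singleton_iff] at ha hb
      refine ⟨1, fun i => if i = 0 then a else b, by simp, by simp, ?_, ?_⟩
      · intro i _
        by_cases h : i = 0 <;> simp only [h, if_true, if_false, Finset.coe_insert,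
          Finset.coe_singleton, Set.mem_insert_iff, Set.mem_singleton_iff] <;> tauto
      · intro i hi
        interval_cases i
        simp only [if_pos rfl, one_ne_zero, if_false]
        rcases ha with rfl | rfl <;> rcases hb with rfl | rfl
        · exact Or.inr rfl
        · exact Or.inl hxy
        · exact Or.inl hyx
        · exact Or.inr rfl
    have hxS : ({x} : Finset X) ∈ KSet κ := ⟨Finset.singleton_nonempty x, connS x⟩
    have hyS : ({y} : Finset X) ∈ KSet κ := ⟨Finset.singleton_nonempty y, connS y⟩
    have hPS : ({x, y} : Finset X) ∈ KSet κ := ⟨⟨x, by simp⟩, connP⟩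
    have ne1 : ({x} : Finset X) ≠ {y} := by simp [hne]
    have ne2 : ({y} : Finset X) ≠ ({x, y} : Finset X) := by
      intro h
      have : x ∈ ({y} : Finset X) := h ▸ (by simp : x ∈ ({x, y} : Finset X))
      simp at this; exact hne this
    have ne3 : ({x} : Finset X) ≠ ({x, y} : Finset X) := by
      intro h
      have : y ∈ ({x} : Finset X) := h ▸ (by simp : y ∈ ({x, y} : Finset X))
      simp at this; exact hne this.symm
    refine ⟨{x}, {y}, {x, y}, hxS, hyS, hPS, ne1, ne2, ne3, ?_, ?_, ?_⟩
    · refine ⟨ne1, fun a ha => ⟨y, by simp, ?_⟩, fun b hb => ⟨x, by simp, ?_⟩⟩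
      · have h : a = x := by simpa using ha
        exact Or.inl (h ▸ hxy)
      · have h : b = y := by simpa using hb
        exact Or.inl (h ▸ hyx)
    · refine ⟨ne2, fun a ha => ⟨y, by simp, Or.inr (by simpa using ha)⟩, ?_⟩
      intro b hb
      simp only [Finset.mem_insert, Finset.mem_singleton] at hb
      rcases hb with rfl | rfl
      · exact ⟨y, by simp, Or.inl hxy⟩
      · exact ⟨b, by simp, Or.inr rfl⟩
    · refine ⟨ne3, fun a ha => ⟨x, by simp, Or.inr (by simpa using ha)⟩, ?_⟩
      intro b hb
      simp only [Finset.mem_insert, Finset.mem_singleton] at hb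
      rcases hb with rfl | rfl
      · exact ⟨b, by simp, Or.inr rfl⟩
      · exact ⟨x, by simp, Or.inl hyx⟩
end

section
/- Let (X,κ) be a digital image and let D ⊂ X. Let 𝒟 = { A ∈ 2^X : A ∩ D ≠ ∅ }. Then D dominates (X,κ) (for every x ∈ X there exists d ∈ D with d ⟷≤_κ x) if and only if 𝒟 dominates (2^X,κ') (for every A ∈ 2^X there exists B ∈ 𝒟 with B ⟷≤_{κ'} A). -/
/-- `D` dominates `(X,κ)` iff `𝒟 = {A ∈ 2^X : A ∩ D ≠ ∅}` dominates
`(2^X,κ')`. -/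
theorem stmt19 {X : Type*}
    (κ : X → X → Prop)
    (hκsymm : ∀ x y, κ x y → κ y x) (hκirr : ∀ x, ¬ κ x x)
    (D : Set X) :
    (∀ x : X, ∃ d ∈ D, AdjEq κ d x) ↔
    (∀ A ∈ TwoX X, ∃ B ∈ {A | A ∈ TwoX X ∧ ((A : Set X) ∩ D).Nonempty},
      AdjEq (HyperAdj κ) B A) := by
  classical
  constructor
  · intro h A hA
    choose f hfD hfadj using h
    refine ⟨A.image f, ⟨hA.image f, ?_⟩, ?_⟩
    · obtain ⟨a, ha⟩ := hA
      exact ⟨f a, Finset.mem_coe.mpr (Finset.mem_image_of_mem f ha), hfD a⟩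
    · by_cases hBA : A.image f = A
      · exact Or.inr hBA
      · refine Or.inl ⟨hBA, ?_, ?_⟩
        · intro b hb
          obtain ⟨a, ha, rfl⟩ := Finset.mem_image.mp hb
          refine ⟨a, ha, hfadj a⟩
        · intro a ha
          refine ⟨f a, Finset.mem_image_of_mem f ha, ?_⟩
          rcases hfadj a with hadj | heq
          · exact Or.inl (hκsymm _ _ hadj)
          · exact Or.inr heq.symm
  · intro h x
    obtain ⟨B, ⟨hB, d, hdB, hdD⟩, hadj⟩ := h {x} (Finset.singleton_nonempty x)
    rcases hadj with hadj | heq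
    · obtain ⟨b, hb, hdb⟩ := hadj.2.1 d hdB
      rw [Finset.mem_singleton] at hb
      subst hb
      exact ⟨d, hdD, hdb⟩
    · subst heq
      rw [Finset.coe_singleton, Set.mem_singleton_iff] at hdB
      subst hdB
      exact ⟨d, hdD, Or.inr rfl⟩
end
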